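/- Let T be a finite non-abelian simple group, k ≥ 2, P a subgroup of S_k, and G := A(k,T) ⋊ P ≤ W(k,T). Let (α,…,α)π be an element of G of prime order p. If π is fixed-point-free on {1,…,k}, then |C_G((α,…,α)π)| = |C_P(π)| · |C_{Out(T)}(ᾱ)| · |T|^{k/p}, where ᾱ denotes the image of α in Out(T). If π has a fixed point on {1,…,k} and f denotes the number of fixed points of π, then |C_G((α,…,α)π)| = |C_P(π)| · |C_{Aut(T)}(α)| · |C_{Inn(T)}(α)|^{f−1} · |T|^{(k−f)/p}. -/

import Mathlib

/-!
Common setup for groups of diagonal type, following Fawcett,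
"The base size of a primitive diagonal group".
-/

namespace Diag

variable (T : Type) [Group T] (k : ℕ)

/-- The permutation action of `S_k` on `k`-tuples of automorphisms of `T`,
as a homomorphism into the automorphism group of `Fin k → MulAut T`;
this is the datum defining the wreath product `Aut(T) ≀ S_k`. -/
def permAction : Equiv.Perm (Fin k) →* MulAut (Fin k → MulAut T) where
  toFun π :=
    { toFun := fun f => f ∘ π.symm
      invFun := fun f => f ∘ π
      left_inv := fun f => by ext i; simp
      right_inv := fun f => by ext i; simp
      map_mul' := fun f g => rfl }
  map_one' := by ext f i; rfl
  map_mul' := fun π σ => by ext f i; rfl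

@[simp] lemma permAction_apply (π : Equiv.Perm (Fin k)) (f : Fin k → MulAut T) (i : Fin k) :
    permAction T k π f i = f (π.symm i) := rfl

/-- The wreath product `Aut(T) ≀_k S_k`. -/
abbrev Wr := SemidirectProduct (Fin k → MulAut T) (Equiv.Perm (Fin k)) (permAction T k)

/-- `Inn(T)`, the group of inner automorphisms, as a subgroup of `Aut(T)`. -/
def Inn : Subgroup (MulAut T) := (MulAut.conj : T →* MulAut T).range

instance : (Inn T).Normal := by
  constructor
  rintro n ⟨t, rfl⟩ g
  refine ⟨g t, ?_⟩
  ext x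
  simp [MulAut.conj_apply, map_mul, map_inv]

/-- `W(k,T) = {(α₁,…,α_k)π ∈ Aut(T) ≀ S_k : α₁Inn(T) = α_iInn(T) for all i}`. -/
def Wgrp : Subgroup (Wr T k) where
  carrier := {w | ∀ i j, (w.left i)⁻¹ * w.left j ∈ Inn T}
  one_mem' := by
    intro i j
    simp only [SemidirectProduct.one_left, Pi.one_apply, inv_one, one_mul]
    exact (Inn T).one_mem
  mul_mem' := by
    intro a b ha hb i j
    have key : ((a * b).left i)⁻¹ * (a * b).left j
        = (b.left (a.right.symm i))⁻¹ * ((a.left i)⁻¹ * a.left j) * (b.left (a.right.symm i))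
          * ((b.left (a.right.symm i))⁻¹ * b.left (a.right.symm j)) := by
      simp only [SemidirectProduct.mul_left, Pi.mul_apply, permAction_apply]
      group
    rw [key]
    exact mul_mem (Subgroup.Normal.conj_mem' (inferInstance : (Inn T).Normal) _ (ha i j) _) (hb _ _)
  inv_mem' := by
    intro a ha i j
    have key : ((a⁻¹).left i)⁻¹ * (a⁻¹).left j
        = a.left (a.right i) * ((a.left (a.right i))⁻¹ * a.left (a.right j))⁻¹
          * (a.left (a.right i))⁻¹ := by
      simp only [SemidirectProduct.inv_left, Pi.inv_apply, permAction_apply]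
      have h1 : (a.right⁻¹).symm = a.right := by ext x; rfl
      rw [h1]
      group
    rw [key]
    exact Subgroup.Normal.conj_mem (inferInstance : (Inn T).Normal) _ (inv_mem (ha _ _)) _

/-- `D(k,T) = {(α,…,α)π ∈ Aut(T) ≀ S_k}`, as a subgroup of the wreath product. -/
def Dgrp : Subgroup (Wr T k) where
  carrier := {w | ∀ i j, w.left i = w.left j}
  one_mem' := fun _ _ => rfl
  mul_mem' := by
    intro a b ha hb i j
    simp only [SemidirectProduct.mul_left, Pi.mul_apply, permAction_apply]
    rw [ha i j, hb (a.right.symm i) (a.right.symm j)]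
  inv_mem' := by
    intro a ha i j
    simp only [SemidirectProduct.inv_left, Pi.inv_apply, permAction_apply]
    rw [ha ((a.right⁻¹).symm i) ((a.right⁻¹).symm j)]

/-- `D(k,T)` viewed as a subgroup of `W(k,T)`. -/
def Dsub : Subgroup ↥(Wgrp T k) := (Dgrp T k).subgroupOf (Wgrp T k)

/-- `Ω(k,T)`, the coset space of `D(k,T)` in `W(k,T)`, on which `W(k,T)` acts
faithfully by multiplication. -/
abbrev Om := ↥(Wgrp T k) ⧸ Dsub T k

/-- For `t ∈ T`, the inner automorphism `φ_t : s ↦ t⁻¹st`. -/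
def phi (t : T) : MulAut T := MulAut.conj t⁻¹

/-- The element `(φ_{t₁},…,φ_{t_k})` of `W(k,T)` determined by a tuple `t`. -/
def innW (t : Fin k → T) : ↥(Wgrp T k) :=
  ⟨⟨fun i => phi T (t i), 1⟩, fun i j =>
    mul_mem (inv_mem (MonoidHom.mem_range.mpr ⟨(t i)⁻¹, rfl⟩))
      (MonoidHom.mem_range.mpr ⟨(t j)⁻¹, rfl⟩)⟩

/-- The point `D(φ_{t₁},…,φ_{t_k})` of `Ω(k,T)`. -/
def pointOf (t : Fin k → T) : Om T k := QuotientGroup.mk (innW T k t)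

/-- The point `D = D(k,T)` of `Ω(k,T)` (the trivial coset). -/
def pt : Om T k := QuotientGroup.mk 1

/-- The diagonal element `(α,…,α)π` of `W(k,T)`. -/
def diagElt (α : MulAut T) (π : Equiv.Perm (Fin k)) : ↥(Wgrp T k) :=
  ⟨⟨fun _ => α, π⟩, fun _ _ => by
    show α⁻¹ * α ∈ Inn T
    rw [inv_mul_cancel]; exact (Inn T).one_mem⟩

/-- The top group `P_G ≤ S_k` of a subgroup `G ≤ W(k,T)`: all permutations `π`
such that `(α₁,…,α_k)π ∈ G` for some automorphisms `α_i`. -/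
def topGroup (G : Subgroup ↥(Wgrp T k)) : Subgroup (Equiv.Perm (Fin k)) :=
  Subgroup.map ((SemidirectProduct.rightHom).comp (Wgrp T k).subtype) G

/-- The subgroup `Inn(T)^k ⋊ S_k` of `W(k,T)`: all `(α₁,…,α_k)π` with every `α_i` inner. -/
def InnSym : Subgroup ↥(Wgrp T k) where
  carrier := {w | ∀ i, (w : Wr T k).left i ∈ Inn T}
  one_mem' := fun _ => (Inn T).one_mem
  mul_mem' := by
    intro a b ha hb i
    show ((a : Wr T k) * b).left i ∈ Inn T
    rw [SemidirectProduct.mul_left]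
    simp only [Pi.mul_apply, permAction_apply]
    exact mul_mem (ha i) (hb _)
  inv_mem' := by
    intro a ha i
    show ((a : Wr T k)⁻¹).left i ∈ Inn T
    rw [SemidirectProduct.inv_left]
    simp only [Pi.inv_apply, permAction_apply]
    exact inv_mem (ha _)

/-- The socle `Inn(T)^k` (that is, `T^k`) as a subgroup of `W(k,T)`. -/
def InnK : Subgroup ↥(Wgrp T k) :=
  InnSym T k ⊓ Subgroup.comap ((SemidirectProduct.rightHom).comp (Wgrp T k).subtype) ⊥

/-- The subgroup `Inn(T)^k ⋊ A_k` of `W(k,T)`. -/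
def InnAlt : Subgroup ↥(Wgrp T k) :=
  InnSym T k ⊓ Subgroup.comap ((SemidirectProduct.rightHom).comp (Wgrp T k).subtype)
    (alternatingGroup (Fin k))

/-- The subgroup `A(k,T) ⋊ P` of `W(k,T)`, for `P ≤ S_k`: all elements of
`W(k,T)` whose permutation part lies in `P`. -/
def AP (P : Subgroup (Equiv.Perm (Fin k))) : Subgroup ↥(Wgrp T k) :=
  Subgroup.comap ((SemidirectProduct.rightHom).comp (Wgrp T k).subtype) P

/-- `B ⊆ Ω(k,T)` is a base for `G ≤ W(k,T)`: only the identity of `G`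
fixes every point of `B`. -/
def IsBase (G : Subgroup ↥(Wgrp T k)) (B : Set (Om T k)) : Prop :=
  ∀ g ∈ G, (∀ ω ∈ B, g • ω = ω) → g = 1

/-- `b(G)`: the minimal size of a base for `G` acting on `Ω(k,T)`. -/
noncomputable def baseSize (G : Subgroup ↥(Wgrp T k)) : ℕ :=
  sInf {n | ∃ B : Finset (Om T k), B.card = n ∧ IsBase T k G ↑B}

/-- `G ≤ W(k,T)` acts primitively on `Ω(k,T)`: the action is transitive and
every block is trivial. -/
def IsPrimitive (G : Subgroup ↥(Wgrp T k)) : Prop :=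
  (∀ ω₁ ω₂ : Om T k, ∃ g ∈ G, g • ω₁ = ω₂) ∧
  ∀ B : Set (Om T k),
    (∀ g ∈ G, (g • ·) '' B = B ∨ Disjoint ((g • ·) '' B) B) →
    B.Subsingleton ∨ B = Set.univ

/-- `G` is a group of diagonal type with socle `T^k`:
`Inn(T)^k ≤ G ≤ W(k,T)` and `G` acts primitively on `Ω(k,T)`. -/
def IsDiagonalType (G : Subgroup ↥(Wgrp T k)) : Prop :=
  InnK T k ≤ G ∧ IsPrimitive T k G

/-- A subgroup `P ≤ S_k` is primitive in its natural action on `{1,…,k}`: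
the action is transitive and every block is trivial. -/
def PermPrimitive (P : Subgroup (Equiv.Perm (Fin k))) : Prop :=
  (∀ i j : Fin k, ∃ π ∈ P, π i = j) ∧
  ∀ B : Set (Fin k),
    (∀ π ∈ P, (π : Fin k → Fin k) '' B = B ∨ Disjoint ((π : Fin k → Fin k) '' B) B) →
    B.Subsingleton ∨ B = Set.univ

end Diag

open Diag


namespace DiagAux

variable {k : ℕ}

lemma zpow_fix (σ : Equiv.Perm (Fin k)) {j : Fin k} (h : σ j = j) : ∀ n : ℤ, (σ ^ n) j = j := by
  have hn : ∀ n : ℕ, (σ ^ n) j = j := by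
    intro n; induction n with
    | zero => rfl
    | succ m ih => rw [pow_succ, Equiv.Perm.mul_apply, h, ih]
  intro n
  rcases Int.natAbs_eq n with hn' | hn'
  · rw [hn', zpow_natCast]; exact hn _
  · rw [hn']
    have : (σ ^ (n.natAbs : ℤ)) j = j := by rw [zpow_natCast]; exact hn _
    calc (σ ^ (-(n.natAbs:ℤ))) j = (σ ^ (-(n.natAbs:ℤ))) ((σ ^ (n.natAbs:ℤ)) j) := by rw [this]
    _ = j := by rw [← Equiv.Perm.mul_apply, ← zpow_add, neg_add_cancel, zpow_zero]; rfl

/-- Setoid of `SameCycle` for a permutation. -/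
def scSetoid (π : Equiv.Perm (Fin k)) : Setoid (Fin k) :=
  ⟨π.SameCycle, ⟨Equiv.Perm.SameCycle.refl π, Equiv.Perm.SameCycle.symm, Equiv.Perm.SameCycle.trans⟩⟩

/-- A choice of orbit representative. -/
noncomputable def rep (π : Equiv.Perm (Fin k)) (i : Fin k) : Fin k :=
  (Quotient.mk (scSetoid π) i).out

lemma rep_sameCycle (π : Equiv.Perm (Fin k)) (i : Fin k) : π.SameCycle (rep π i) i := by
  have : (Quotient.mk (scSetoid π) (rep π i)) = Quotient.mk (scSetoid π) i := Quotient.out_eq _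
  exact Quotient.exact this

lemma rep_eq_of_sameCycle (π : Equiv.Perm (Fin k)) {i j : Fin k} (h : π.SameCycle i j) :
    rep π i = rep π j := by
  unfold rep; rw [Quotient.sound (h : (scSetoid π).r i j)]

lemma rep_apply (π : Equiv.Perm (Fin k)) (i : Fin k) : rep π (π i) = rep π i :=
  (rep_eq_of_sameCycle π ⟨1, by simp⟩).symm

lemma rep_apply_inv (π : Equiv.Perm (Fin k)) (i : Fin k) : rep π (π⁻¹ i) = rep π i :=
  rep_eq_of_sameCycle π ⟨1, by simp⟩

lemma rep_rep (π : Equiv.Perm (Fin k)) (i : Fin k) : rep π (rep π i) = rep π i :=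
  rep_eq_of_sameCycle π (rep_sameCycle π i)

lemma rep_zpow (π : Equiv.Perm (Fin k)) (i : Fin k) (n : ℤ) : rep π ((π ^ n) i) = rep π i :=
  rep_eq_of_sameCycle π ⟨-n, by rw [← Equiv.Perm.mul_apply, ← zpow_add, neg_add_cancel]; rfl⟩

lemma rep_pow (π : Equiv.Perm (Fin k)) (i : Fin k) (n : ℕ) : rep π ((π ^ n) i) = rep π i := by
  have := rep_zpow π i (n : ℤ); rwa [zpow_natCast] at this

/-- The exponent taking the representative to the point. -/
noncomputable def expo (π : Equiv.Perm (Fin k)) (i : Fin k) : ℤ :=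
  (rep_sameCycle π i).choose

lemma expo_spec (π : Equiv.Perm (Fin k)) (i : Fin k) : (π ^ expo π i) (rep π i) = i :=
  (rep_sameCycle π i).choose_spec

/-- A fixed point is its own representative. -/
lemma rep_of_fixed (π : Equiv.Perm (Fin k)) {i : Fin k} (h : π i = i) : rep π i = i := by
  obtain ⟨n, hn⟩ := (rep_sameCycle π i).symm
  rw [zpow_fix π h n] at hn
  exact hn.symm

/-- If the representative of `i` is fixed then so is `i`. -/
lemma fixed_of_rep_fixed (π : Equiv.Perm (Fin k)) {i : Fin k} (h : π (rep π i) = rep π i) :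
    π i = i := by
  have := expo_spec π i
  rw [zpow_fix π h (expo π i)] at this
  rw [← this, h]

open Finset

lemma zpow_eq_of_dvd_sub {G : Type*} [Group G] {p : ℕ} {g : G} (hg : g ^ p = 1) {a b : ℤ}
    (h : (p : ℤ) ∣ a - b) : g ^ a = g ^ b := by
  obtain ⟨t, ht⟩ := h
  have ha : a = b + p * t := by linarith
  rw [ha, zpow_add, zpow_mul, zpow_natCast, hg, one_zpow, mul_one]

lemma dvd_of_zpow_fix {p : ℕ} (hp : p.Prime) {π : Equiv.Perm (Fin k)} (hπp : π ^ p = 1)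
    {j : Fin k} (hj : π j ≠ j) : ∀ {n : ℤ}, (π ^ n) j = j → (p : ℤ) ∣ n := by
  have hnat : ∀ m : ℕ, (π ^ m) j = j → p ∣ m := by
    intro m hm
    set d := Nat.gcd m p with hd
    have hdvd : d ∣ p := Nat.gcd_dvd_right m p
    have hfix : (π ^ (d : ℤ)) j = j := by
      have hbez := Nat.gcd_eq_gcd_ab m p
      rw [hbez, zpow_add, zpow_mul, zpow_mul, Equiv.Perm.mul_apply]
      have h1 : (π ^ (p:ℤ)) = 1 := by rw [zpow_natCast, hπp]
      rw [h1, one_zpow, Equiv.Perm.one_apply]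
      exact zpow_fix (π ^ (m:ℤ)) (by rw [zpow_natCast]; exact hm) _
    rcases (Nat.Prime.eq_one_or_self_of_dvd hp d hdvd) with h1 | h1
    · exfalso; apply hj
      have : (π ^ ((1:ℕ) : ℤ)) j = j := by rw [← h1]; exact hfix
      simpa using this
    · rw [← h1]; exact Nat.gcd_dvd_left m p
  intro n hn
  have habs : (π ^ (n.natAbs : ℤ)) j = j := by
    rcases Int.natAbs_eq n with h | h
    · rw [← h]; exact hn
    · have : (π ^ (-(n.natAbs : ℤ))) j = j := by rw [← h]; exact hn
      calc (π ^ ((n.natAbs:ℤ))) j = (π ^ ((n.natAbs:ℤ))) ((π ^ (-(n.natAbs:ℤ))) j) := by rw [this]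
      _ = j := by rw [← Equiv.Perm.mul_apply, ← zpow_add, add_neg_cancel, zpow_zero]; rfl
  have : p ∣ n.natAbs := hnat n.natAbs (by rw [← zpow_natCast]; exact habs)
  exact dvd_trans (Int.natCast_dvd_natCast.mpr this) (Int.natAbs_dvd.mpr dvd_rfl)

/-- Non-fixed points stay non-fixed along powers. -/
lemma nonfixed_zpow {π : Equiv.Perm (Fin k)} {j : Fin k} (hj : π j ≠ j) (n : ℤ) :
    π ((π ^ n) j) ≠ (π ^ n) j := by
  intro h
  apply hj
  have hc : π ^ n * π = π * π ^ n := by rw [← zpow_add_one, ← zpow_one_add, add_comm]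
  have h2 : (π ^ n) (π j) = (π ^ n) j := by
    rw [← Equiv.Perm.mul_apply, hc, Equiv.Perm.mul_apply, h]
  exact (π ^ n).injective h2

lemma card_nonfixed_reps {p : ℕ} (hp : p.Prime) {π : Equiv.Perm (Fin k)} (hπp : π ^ p = 1) :
    Nat.card {s : Fin k // rep π s = s ∧ π s ≠ s} * p = Nat.card {i : Fin k // π i ≠ i} := by
  classical
  have key : ∀ s : Fin k, rep π s = s → π s ≠ s →
      (univ.filter (fun i : Fin k => π i ≠ i ∧ rep π i = s)).card = p := by
    intro s hrs hπs
    rw [← Fintype.card_fin p, ← Finset.card_univ]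
    refine Finset.card_bij' (fun i _ => (⟨((expo π i) % p).toNat, by
        have h0 : 0 ≤ (expo π i) % p := Int.emod_nonneg _ (by exact_mod_cast hp.ne_zero)
        have h1 : (expo π i) % p < p := Int.emod_lt_of_pos _ (by exact_mod_cast hp.pos)
        omega⟩ : Fin p))
      (fun m _ => (π ^ (m : ℕ)) s) (fun i hi => mem_univ _) ?_ ?_ ?_
    · intro m _
      simp only [mem_filter, mem_univ, true_and]
      refine ⟨?_, by rw [rep_pow, hrs]⟩
      have := nonfixed_zpow hπs ((m:ℕ):ℤ)
      rwa [zpow_natCast] at this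
    · -- left inverse
      intro i hi
      simp only [mem_filter, mem_univ, true_and] at hi
      obtain ⟨hπi, hri⟩ := hi
      have hspec := expo_spec π i
      rw [hri] at hspec
      have hπper : π ^ ((expo π i) % p) = π ^ (expo π i) := by
        apply zpow_eq_of_dvd_sub hπp
        have hdef : expo π i % p - expo π i = -((p:ℤ) * (expo π i / p)) := by
          rw [Int.emod_def]; ring
        rw [hdef]
        exact (dvd_neg.mpr ⟨_, rfl⟩)
      have h0 : 0 ≤ (expo π i) % p := Int.emod_nonneg _ (by exact_mod_cast hp.ne_zero)
      calc (π ^ (((expo π i % p).toNat : ℕ))) s = (π ^ ((expo π i % p))) s := by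
            rw [← zpow_natCast, Int.toNat_of_nonneg h0]
      _ = i := by rw [hπper, hspec]
    · -- right inverse
      intro m _
      set j := (π ^ (m:ℕ)) s with hjdef
      have hrj : rep π j = s := by rw [hjdef, rep_pow, hrs]
      have hspec := expo_spec π j
      rw [hrj] at hspec
      have hfix : (π ^ (expo π j - ((m:ℕ):ℤ))) s = s := by
        have happ : (π ^ (((m:ℕ)):ℤ)) ((π ^ (expo π j - ((m:ℕ):ℤ))) s) = (π ^ (((m:ℕ)):ℤ)) s := by
          rw [← Equiv.Perm.mul_apply, ← zpow_add]
          have hexp : ((m:ℕ):ℤ) + (expo π j - ((m:ℕ):ℤ)) = expo π j := by ring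
          rw [hexp, hspec, hjdef, zpow_natCast]
        exact (π ^ (((m:ℕ)):ℤ)).injective happ
      have hdvd : (p:ℤ) ∣ expo π j - ((m:ℕ):ℤ) := dvd_of_zpow_fix hp hπp hπs hfix
      have hmod : expo π j % p = ((m:ℕ):ℤ) % p := (Int.modEq_iff_dvd.mpr hdvd).symm
      have hmlt : ((m:ℕ):ℤ) % p = ((m:ℕ):ℤ) :=
        Int.emod_eq_of_lt (by positivity) (by exact_mod_cast m.2)
      apply Fin.ext
      show (expo π j % p).toNat = (m : ℕ)
      rw [hmod, hmlt]
      simp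
  have hfib := Finset.card_eq_sum_card_fiberwise
    (f := fun i : Fin k => rep π i)
    (s := univ.filter (fun i : Fin k => π i ≠ i))
    (t := univ.filter (fun s : Fin k => rep π s = s ∧ π s ≠ s))
    (by
      intro i hi
      simp only [Finset.mem_coe, mem_filter, mem_univ, true_and] at hi ⊢
      exact ⟨rep_rep π i, fun h => hi (fixed_of_rep_fixed π h)⟩)
  have h2 : ∀ s ∈ univ.filter (fun s : Fin k => rep π s = s ∧ π s ≠ s),
      ((univ.filter (fun i : Fin k => π i ≠ i)).filter (fun a => rep π a = s)).card = p := by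
    intro s hs
    simp only [mem_filter, mem_univ, true_and] at hs
    rw [Finset.filter_filter]
    exact key s hs.1 hs.2
  rw [Nat.card_eq_fintype_card, Nat.card_eq_fintype_card, Fintype.card_subtype,
    Fintype.card_subtype, hfib, Finset.sum_congr rfl h2, Finset.sum_const, smul_eq_mul]

lemma rec_zpow {A : Type*} [Group A] {α : A} {π : Equiv.Perm (Fin k)} {β : Fin k → A}
    (hc : ∀ i, β i * α = α * β (π⁻¹ i)) :
    ∀ (n : ℤ) (i : Fin k), β ((π ^ n) i) = α ^ n * β i * α ^ (-n) := by
  have step2 : ∀ j, β (π j) = α * β j * α⁻¹ := by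
    intro j
    have h := hc (π j)
    rw [show π⁻¹ (π j) = j from π.symm_apply_apply j] at h
    rw [← h]; group
  have step1 : ∀ j, β (π⁻¹ j) = α⁻¹ * β j * α := by
    intro j
    calc β (π⁻¹ j) = α⁻¹ * (α * β (π⁻¹ j)) := by group
    _ = α⁻¹ * (β j * α) := by rw [hc j]
    _ = α⁻¹ * β j * α := by group
  intro n
  induction n using Int.induction_on with
  | zero => intro i; simp
  | succ n ih =>
    intro i
    have h1 : (π ^ ((n:ℤ)+1)) i = (π ^ (n:ℤ)) (π i) := by
      rw [zpow_add_one, Equiv.Perm.mul_apply]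
    rw [h1, ih (π i), step2 i]
    group
  | pred n ih =>
    intro i
    have h1 : (π ^ (-(n:ℤ)-1)) i = (π ^ (-(n:ℤ))) (π⁻¹ i) := by
      rw [zpow_sub_one, Equiv.Perm.mul_apply]
    rw [h1, ih (π⁻¹ i), step1 i]
    group

lemma card_B_fpf {A : Type*} [Group A] [Finite A] {N : Subgroup A} [N.Normal] {p : ℕ}
    (hp : p.Prime) {α : A} {π : Equiv.Perm (Fin k)} (hα : α ^ p = 1) (hπp : π ^ p = 1)
    (hk : 0 < k) (hfpf : ∀ i, π i ≠ i) :
    Nat.card {β : Fin k → A // (∀ i j, (β i)⁻¹ * β j ∈ N) ∧ ∀ i, β i * α = α * β (π⁻¹ i)} =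
      Nat.card {c : A ⧸ N // c * QuotientGroup.mk α = QuotientGroup.mk α * c} *
        Nat.card ↥N ^ (k / p) := by
  classical
  set i₀ : Fin k := ⟨0, hk⟩ with hi₀
  have hcosetEq : ∀ (β : Fin k → A), (∀ i j, (β i)⁻¹ * β j ∈ N) →
      ∀ i j, (QuotientGroup.mk (β i) : A ⧸ N) = QuotientGroup.mk (β j) :=
    fun β h i j => QuotientGroup.eq.mpr (h i j)
  have hnonfix_rep : ∀ i : Fin k, π (rep π i) ≠ rep π i := by
    intro i h
    exact hfpf i (fixed_of_rep_fixed π h)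
  have hout : ∀ q : A ⧸ N, (QuotientGroup.mk q.out : A ⧸ N) = q := fun q => Quotient.out_eq' q
  -- the value of `QuotientGroup.mk` on the reconstructed tuple
  have mkβ : ∀ (c : {c : A ⧸ N // c * QuotientGroup.mk α = QuotientGroup.mk α * c})
      (nn : {s : Fin k // rep π s = s} → ↥N) (i : Fin k),
      (QuotientGroup.mk (α ^ expo π i * (c.1.out * ((nn ⟨rep π i, rep_rep π i⟩ : ↥N) : A))
        * α ^ (-(expo π i))) : A ⧸ N) = c.1 := by
    intro c nn i
    have h1 : (QuotientGroup.mk (α ^ expo π i * (c.1.out * ((nn ⟨rep π i, rep_rep π i⟩ : ↥N) : A))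
        * α ^ (-(expo π i))) : A ⧸ N)
        = (QuotientGroup.mk α : A ⧸ N) ^ expo π i * (c.1 * 1)
          * (QuotientGroup.mk α : A ⧸ N) ^ (-(expo π i)) := by
      calc (QuotientGroup.mk (α ^ expo π i * (c.1.out * ((nn ⟨rep π i, rep_rep π i⟩ : ↥N) : A))
          * α ^ (-(expo π i))) : A ⧸ N)
          = (QuotientGroup.mk (α ^ expo π i) : A ⧸ N)
            * ((QuotientGroup.mk c.1.out : A ⧸ N)
              * (QuotientGroup.mk ((nn ⟨rep π i, rep_rep π i⟩ : ↥N) : A) : A ⧸ N))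
            * (QuotientGroup.mk (α ^ (-(expo π i))) : A ⧸ N) := rfl
        _ = _ := by
            rw [QuotientGroup.mk_zpow, QuotientGroup.mk_zpow, hout,
              (QuotientGroup.eq_one_iff _).mpr (nn ⟨rep π i, rep_rep π i⟩).2]
    rw [h1, mul_one]
    have hc2 : Commute c.1 (QuotientGroup.mk α : A ⧸ N) := c.2
    have hcom : Commute (c.1) ((QuotientGroup.mk α : A ⧸ N) ^ expo π i) := hc2.zpow_right _
    calc (QuotientGroup.mk α : A ⧸ N) ^ expo π i * c.1
          * (QuotientGroup.mk α : A ⧸ N) ^ (-(expo π i))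
        = c.1 * (QuotientGroup.mk α : A ⧸ N) ^ expo π i
          * (QuotientGroup.mk α : A ⧸ N) ^ (-(expo π i)) := by rw [hcom.eq]
      _ = c.1 := by group
  have E : {β : Fin k → A // (∀ i j, (β i)⁻¹ * β j ∈ N) ∧ ∀ i, β i * α = α * β (π⁻¹ i)} ≃
      {c : A ⧸ N // c * QuotientGroup.mk α = QuotientGroup.mk α * c}
        × ({s : Fin k // rep π s = s} → ↥N) := by
    refine
      { toFun := fun β => (⟨QuotientGroup.mk (β.1 i₀), ?_⟩,
          fun s => ⟨(QuotientGroup.mk (β.1 i₀) : A ⧸ N).out⁻¹ * β.1 s.1, ?_⟩),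
        invFun := fun cn => ⟨fun i => α ^ expo π i
          * ((cn.1.1.out) * ((cn.2 ⟨rep π i, rep_rep π i⟩ : ↥N) : A)) * α ^ (-(expo π i)),
          ?_, ?_⟩,
        left_inv := ?_, right_inv := ?_ }
    · -- the common coset commutes with mk α
      calc (QuotientGroup.mk (β.1 i₀) : A ⧸ N) * QuotientGroup.mk α
          = QuotientGroup.mk (β.1 i₀ * α) := rfl
        _ = QuotientGroup.mk (α * β.1 (π⁻¹ i₀)) := congrArg _ (β.2.2 i₀)
        _ = QuotientGroup.mk α * QuotientGroup.mk (β.1 (π⁻¹ i₀)) := rfl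
        _ = QuotientGroup.mk α * QuotientGroup.mk (β.1 i₀) := by
            rw [hcosetEq β.1 β.2.1 (π⁻¹ i₀) i₀]
    · -- the N-components
      apply QuotientGroup.eq.mp
      rw [hout]
      exact hcosetEq β.1 β.2.1 i₀ s.1
    · -- reconstructed tuple: coset condition
      intro i j
      apply QuotientGroup.eq.mp
      rw [mkβ cn.1 cn.2 i, mkβ cn.1 cn.2 j]
    · -- reconstructed tuple: twisted equivariance
      intro i
      have hrr' : rep π (π⁻¹ i) = rep π i := rep_apply_inv π i
      have hidx : (⟨rep π (π⁻¹ i), rep_rep π (π⁻¹ i)⟩ : {s : Fin k // rep π s = s})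
          = ⟨rep π i, rep_rep π i⟩ := Subtype.ext hrr'
      have h1 : (π ^ expo π (π⁻¹ i)) (rep π i) = π⁻¹ i := by
        have := expo_spec π (π⁻¹ i); rwa [hrr'] at this
      have h2 : (π ^ (expo π i - 1)) (rep π i) = π⁻¹ i := by
        have he : expo π i - 1 = -1 + expo π i := by ring
        rw [he, zpow_add, zpow_neg_one, Equiv.Perm.mul_apply, expo_spec π i]
      have h3 : (π ^ (expo π i - 1)) ((π ^ (expo π (π⁻¹ i) - (expo π i - 1))) (rep π i))
          = (π ^ (expo π i - 1)) (rep π i) := by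
        rw [← Equiv.Perm.mul_apply, ← zpow_add]
        have he : expo π i - 1 + (expo π (π⁻¹ i) - (expo π i - 1)) = expo π (π⁻¹ i) := by ring
        rw [he, h1, h2]
      have h4 := (π ^ (expo π i - 1)).injective h3
      have hdvd : (p:ℤ) ∣ expo π (π⁻¹ i) - (expo π i - 1) :=
        dvd_of_zpow_fix hp hπp (hnonfix_rep i) h4
      have hα1 : α ^ expo π (π⁻¹ i) = α ^ (expo π i - 1) := zpow_eq_of_dvd_sub hα hdvd
      have hα2 : α ^ (-(expo π (π⁻¹ i))) = α ^ (-(expo π i - 1)) := by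
        apply zpow_eq_of_dvd_sub hα
        have he : -(expo π (π⁻¹ i)) - -(expo π i - 1) = -(expo π (π⁻¹ i) - (expo π i - 1)) := by
          ring
        rw [he]; exact dvd_neg.mpr hdvd
      show α ^ expo π i * ((cn.1.1.out) * ((cn.2 ⟨rep π i, rep_rep π i⟩ : ↥N) : A))
          * α ^ (-(expo π i)) * α
          = α * (α ^ expo π (π⁻¹ i)
            * ((cn.1.1.out) * ((cn.2 ⟨rep π (π⁻¹ i), rep_rep π (π⁻¹ i)⟩ : ↥N) : A))
            * α ^ (-(expo π (π⁻¹ i))))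
      rw [hidx, hα1, hα2]
      group
    · -- left inverse
      intro β
      apply Subtype.ext
      funext i
      show α ^ expo π i
          * ((QuotientGroup.mk (β.1 i₀) : A ⧸ N).out
            * ((QuotientGroup.mk (β.1 i₀) : A ⧸ N).out⁻¹ * β.1 (rep π i)))
          * α ^ (-(expo π i)) = β.1 i
      rw [mul_inv_cancel_left]
      have hr := rec_zpow β.2.2 (expo π i) (rep π i)
      rw [expo_spec π i] at hr
      rw [← hr]
    · -- right inverse
      rintro ⟨c, nn⟩
      have hfst : ∀ j : Fin k, (QuotientGroup.mk (α ^ expo π j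
          * ((c.1.out) * ((nn ⟨rep π j, rep_rep π j⟩ : ↥N) : A)) * α ^ (-(expo π j))) : A ⧸ N)
          = c.1 := mkβ c nn
      refine Prod.ext ?_ ?_
      · exact Subtype.ext (hfst i₀)
      · funext s
        apply Subtype.ext
        show (QuotientGroup.mk (α ^ expo π i₀
            * ((c.1.out) * ((nn ⟨rep π i₀, rep_rep π i₀⟩ : ↥N) : A))
            * α ^ (-(expo π i₀))) : A ⧸ N).out⁻¹
          * (α ^ expo π s.1 * ((c.1.out) * ((nn ⟨rep π s.1, rep_rep π s.1⟩ : ↥N) : A))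
            * α ^ (-(expo π s.1))) = (nn s : A)
        rw [hfst i₀]
        have hsrep : (⟨rep π s.1, rep_rep π s.1⟩ : {s : Fin k // rep π s = s}) = s :=
          Subtype.ext s.2
        rw [hsrep]
        have hes : (π ^ expo π s.1) s.1 = s.1 := by
          have h := expo_spec π s.1; rwa [s.2] at h
        have hdvd : (p:ℤ) ∣ expo π s.1 := dvd_of_zpow_fix hp hπp (hfpf s.1) hes
        have hα1 : α ^ expo π s.1 = 1 := by
          have h := zpow_eq_of_dvd_sub hα (a := expo π s.1) (b := 0) (by simpa using hdvd)
          simpa using h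
        have hα2 : α ^ (-(expo π s.1)) = 1 := by
          have h := zpow_eq_of_dvd_sub hα (a := -(expo π s.1)) (b := 0)
            (by simpa using dvd_neg.mpr hdvd)
          simpa using h
        rw [hα1, hα2, one_mul, mul_one, inv_mul_cancel_left]
  rw [Nat.card_congr E, Nat.card_prod, Nat.card_fun]
  congr 2
  have h1 := card_nonfixed_reps hp hπp
  have h2 : Nat.card {i : Fin k // π i ≠ i} = k := by
    rw [Nat.card_congr (Equiv.subtypeUnivEquiv hfpf)]; simp
  have h3 : Nat.card {s : Fin k // rep π s = s}
      = Nat.card {s : Fin k // rep π s = s ∧ π s ≠ s} :=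
    Nat.card_congr (Equiv.subtypeEquivRight (fun s => ⟨fun h => ⟨h, hfpf s⟩, And.left⟩))
  rw [h2] at h1
  rw [h3]
  conv_rhs => rw [← h1]
  exact (Nat.mul_div_cancel _ hp.pos).symm

section FixedCase

variable {A : Type*} [Group A] {N : Subgroup A}

/-- Reconstruction of a tuple from its data, in the fixed-point case. -/
noncomputable def Bfun (N : Subgroup A) (α : A) (π : Equiv.Perm (Fin k)) (i₀ : Fin k)
    (γ : {γ : A // γ * α = α * γ})
    (m : {s : Fin k // π s = s ∧ s ≠ i₀} → {b : A // b ∈ N ∧ b * α = α * b})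
    (nn : {s : Fin k // rep π s = s ∧ π s ≠ s} → ↥N) : Fin k → A := fun i =>
  if h : π i = i then (if h2 : i = i₀ then γ.1 else γ.1 * (m ⟨i, ⟨h, h2⟩⟩).1)
  else α ^ expo π i
    * (γ.1 * ((nn ⟨rep π i, ⟨rep_rep π i, fun hf => h (fixed_of_rep_fixed π hf)⟩⟩ : ↥N) : A))
    * α ^ (-(expo π i))

variable [N.Normal]

lemma mk_Bfun (α : A) (π : Equiv.Perm (Fin k)) (i₀ : Fin k)
    (γ : {γ : A // γ * α = α * γ})
    (m : {s : Fin k // π s = s ∧ s ≠ i₀} → {b : A // b ∈ N ∧ b * α = α * b})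
    (nn : {s : Fin k // rep π s = s ∧ π s ≠ s} → ↥N) (i : Fin k) :
    (QuotientGroup.mk (Bfun N α π i₀ γ m nn i) : A ⧸ N) = QuotientGroup.mk γ.1 := by
  simp only [Bfun]
  by_cases h : π i = i
  · rw [dif_pos h]
    by_cases h2 : i = i₀
    · rw [dif_pos h2]
    · rw [dif_neg h2]
      have h3 : (QuotientGroup.mk (γ.1 * (m ⟨i, ⟨h, h2⟩⟩).1) : A ⧸ N)
          = QuotientGroup.mk γ.1 * QuotientGroup.mk (m ⟨i, ⟨h, h2⟩⟩).1 := rfl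
      rw [h3, (QuotientGroup.eq_one_iff _).mpr (m ⟨i, ⟨h, h2⟩⟩).2.1, mul_one]
  · rw [dif_neg h]
    have hγc : (QuotientGroup.mk γ.1 : A ⧸ N) * QuotientGroup.mk α
        = QuotientGroup.mk α * QuotientGroup.mk γ.1 := congrArg QuotientGroup.mk γ.2
    have hcom : Commute ((QuotientGroup.mk γ.1 : A ⧸ N))
        ((QuotientGroup.mk α : A ⧸ N) ^ expo π i) := Commute.zpow_right hγc _
    calc (QuotientGroup.mk (α ^ expo π i
          * (γ.1 * ((nn ⟨rep π i, ⟨rep_rep π i, fun hf => h (fixed_of_rep_fixed π hf)⟩⟩ : ↥N) : A))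
          * α ^ (-(expo π i))) : A ⧸ N)
        = (QuotientGroup.mk (α ^ expo π i) : A ⧸ N)
          * ((QuotientGroup.mk γ.1 : A ⧸ N)
            * (QuotientGroup.mk ((nn ⟨rep π i, ⟨rep_rep π i,
                fun hf => h (fixed_of_rep_fixed π hf)⟩⟩ : ↥N) : A) : A ⧸ N))
          * (QuotientGroup.mk (α ^ (-(expo π i))) : A ⧸ N) := rfl
      _ = (QuotientGroup.mk α : A ⧸ N) ^ expo π i * ((QuotientGroup.mk γ.1 : A ⧸ N) * 1)
          * (QuotientGroup.mk α : A ⧸ N) ^ (-(expo π i)) := by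
          rw [QuotientGroup.mk_zpow, QuotientGroup.mk_zpow,
            (QuotientGroup.eq_one_iff _).mpr (nn _).2]
      _ = QuotientGroup.mk γ.1 := by
          rw [mul_one, ← hcom.eq]
          group

lemma card_B_fix [Finite A] {p : ℕ} (hp : p.Prime) {α : A} {π : Equiv.Perm (Fin k)}
    (hα : α ^ p = 1) (hπp : π ^ p = 1) {i₀ : Fin k} (hi₀ : π i₀ = i₀) :
    Nat.card {β : Fin k → A // (∀ i j, (β i)⁻¹ * β j ∈ N) ∧ ∀ i, β i * α = α * β (π⁻¹ i)} =
      Nat.card {β : A // β * α = α * β} *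
      Nat.card {β : A // β ∈ N ∧ β * α = α * β} ^ (Nat.card {i : Fin k // π i = i} - 1) *
      Nat.card ↥N ^ ((k - Nat.card {i : Fin k // π i = i}) / p) := by
  classical
  have hfix_inv : ∀ i : Fin k, π i = i → π⁻¹ i = i := by
    intro i h
    conv_lhs => rw [← h]
    exact π.symm_apply_apply i
  have hnonfix_inv : ∀ i : Fin k, π i ≠ i → π (π⁻¹ i) ≠ π⁻¹ i := by
    intro i h h'
    apply h
    have hi : i = π⁻¹ i := by rw [← h']; exact (π.apply_symm_apply i).symm
    calc π i = π (π⁻¹ i) := by rw [← hi]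
    _ = i := π.apply_symm_apply i
  have hnonfix_rep : ∀ i : Fin k, π i ≠ i → π (rep π i) ≠ rep π i :=
    fun i h hf => h (fixed_of_rep_fixed π hf)
  have E : {β : Fin k → A // (∀ i j, (β i)⁻¹ * β j ∈ N) ∧ ∀ i, β i * α = α * β (π⁻¹ i)} ≃
      {γ : A // γ * α = α * γ}
        × ({s : Fin k // π s = s ∧ s ≠ i₀} → {b : A // b ∈ N ∧ b * α = α * b})
        × ({s : Fin k // rep π s = s ∧ π s ≠ s} → ↥N) := by
    refine
      { toFun := fun β => (⟨β.1 i₀, ?_⟩,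
          fun s => ⟨(β.1 i₀)⁻¹ * β.1 s.1, ?_, ?_⟩,
          fun s => ⟨(β.1 i₀)⁻¹ * β.1 s.1, β.2.1 i₀ s.1⟩),
        invFun := fun d => ⟨Bfun N α π i₀ d.1 d.2.1 d.2.2, ?_, ?_⟩,
        left_inv := ?_, right_inv := ?_ }
    · -- β i₀ commutes with α
      have h := β.2.2 i₀
      rwa [hfix_inv i₀ hi₀] at h
    · exact β.2.1 i₀ s.1
    · -- (β i₀)⁻¹ * β s commutes with α, for s a fixed point
      have hs : β.1 s.1 * α = α * β.1 s.1 := by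
        have h := β.2.2 s.1
        rwa [hfix_inv s.1 s.2.1] at h
      have h0 : β.1 i₀ * α = α * β.1 i₀ := by
        have h := β.2.2 i₀
        rwa [hfix_inv i₀ hi₀] at h
      have c1 : Commute (β.1 i₀)⁻¹ α := Commute.inv_left h0
      exact c1.mul_left hs
    · -- coset condition for Bfun
      intro i j
      apply QuotientGroup.eq.mp
      rw [mk_Bfun α π i₀ d.1 d.2.1 d.2.2 i, mk_Bfun α π i₀ d.1 d.2.1 d.2.2 j]
    · -- twisted equivariance for Bfun
      intro i
      by_cases h : π i = i
      · rw [hfix_inv i h]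
        have hcom : Bfun N α π i₀ d.1 d.2.1 d.2.2 i * α = α * Bfun N α π i₀ d.1 d.2.1 d.2.2 i := by
          simp only [Bfun]
          rw [dif_pos h]
          by_cases h2 : i = i₀
          · rw [dif_pos h2]; exact d.1.2
          · rw [dif_neg h2]
            have c1 : Commute (d.1.1) α := d.1.2
            have c2 : Commute ((d.2.1 ⟨i, ⟨h, h2⟩⟩).1) α := (d.2.1 ⟨i, ⟨h, h2⟩⟩).2.2
            exact c1.mul_left c2
        exact hcom
      · -- non-fixed case
        have h' : π (π⁻¹ i) ≠ π⁻¹ i := hnonfix_inv i h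
        have hrr' : rep π (π⁻¹ i) = rep π i := rep_apply_inv π i
        have h1 : (π ^ expo π (π⁻¹ i)) (rep π i) = π⁻¹ i := by
          have hh := expo_spec π (π⁻¹ i); rwa [hrr'] at hh
        have h2 : (π ^ (expo π i - 1)) (rep π i) = π⁻¹ i := by
          have he : expo π i - 1 = -1 + expo π i := by ring
          rw [he, zpow_add, zpow_neg_one, Equiv.Perm.mul_apply, expo_spec π i]
        have h3 : (π ^ (expo π i - 1)) ((π ^ (expo π (π⁻¹ i) - (expo π i - 1))) (rep π i))
            = (π ^ (expo π i - 1)) (rep π i) := by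
          rw [← Equiv.Perm.mul_apply, ← zpow_add]
          have he : expo π i - 1 + (expo π (π⁻¹ i) - (expo π i - 1)) = expo π (π⁻¹ i) := by ring
          rw [he, h1, h2]
        have h4 := (π ^ (expo π i - 1)).injective h3
        have hdvd : (p:ℤ) ∣ expo π (π⁻¹ i) - (expo π i - 1) :=
          dvd_of_zpow_fix hp hπp (hnonfix_rep i h) h4
        have hα1 : α ^ expo π (π⁻¹ i) = α ^ (expo π i - 1) := zpow_eq_of_dvd_sub hα hdvd
        have hα2 : α ^ (-(expo π (π⁻¹ i))) = α ^ (-(expo π i - 1)) := by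
          apply zpow_eq_of_dvd_sub hα
          have he : -(expo π (π⁻¹ i)) - -(expo π i - 1)
              = -(expo π (π⁻¹ i) - (expo π i - 1)) := by ring
          rw [he]; exact dvd_neg.mpr hdvd
        have hidx : (⟨rep π (π⁻¹ i), ⟨rep_rep π (π⁻¹ i),
              fun hf => h' (fixed_of_rep_fixed π hf)⟩⟩
                : {s : Fin k // rep π s = s ∧ π s ≠ s})
            = ⟨rep π i, ⟨rep_rep π i, fun hf => h (fixed_of_rep_fixed π hf)⟩⟩ :=
          Subtype.ext hrr'
        show Bfun N α π i₀ d.1 d.2.1 d.2.2 i * α = α * Bfun N α π i₀ d.1 d.2.1 d.2.2 (π⁻¹ i)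
        simp only [Bfun]
        rw [dif_neg h, dif_neg h', hidx, hα1, hα2]
        group
    · -- left inverse
      intro β
      apply Subtype.ext
      funext i
      show Bfun N α π i₀ _ _ _ i = β.1 i
      simp only [Bfun]
      by_cases h : π i = i
      · rw [dif_pos h]
        by_cases h2 : i = i₀
        · rw [dif_pos h2, h2]
        · rw [dif_neg h2, mul_inv_cancel_left]
      · rw [dif_neg h, mul_inv_cancel_left]
        have hr := rec_zpow β.2.2 (expo π i) (rep π i)
        rw [expo_spec π i] at hr
        rw [← hr]
    · -- right inverse
      rintro ⟨γ, m, nn⟩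
      have hB0 : Bfun N α π i₀ γ m nn i₀ = γ.1 := by
        simp [Bfun, hi₀]
      refine Prod.ext ?_ (Prod.ext ?_ ?_)
      · exact Subtype.ext hB0
      · funext s
        apply Subtype.ext
        show (Bfun N α π i₀ γ m nn i₀)⁻¹ * Bfun N α π i₀ γ m nn s.1 = (m s).1
        rw [hB0]
        have hBs : Bfun N α π i₀ γ m nn s.1 = γ.1 * (m s).1 := by
          simp only [Bfun]
          rw [dif_pos s.2.1, dif_neg s.2.2]
        rw [hBs, inv_mul_cancel_left]
      · funext s
        apply Subtype.ext
        show (Bfun N α π i₀ γ m nn i₀)⁻¹ * Bfun N α π i₀ γ m nn s.1 = ((nn s : ↥N) : A)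
        rw [hB0]
        have hes : (π ^ expo π s.1) s.1 = s.1 := by
          have hh := expo_spec π s.1; rwa [s.2.1] at hh
        have hdvd : (p:ℤ) ∣ expo π s.1 := dvd_of_zpow_fix hp hπp s.2.2 hes
        have hα1 : α ^ expo π s.1 = 1 := by
          have hh := zpow_eq_of_dvd_sub hα (a := expo π s.1) (b := 0) (by simpa using hdvd)
          simpa using hh
        have hα2 : α ^ (-(expo π s.1)) = 1 := by
          have hh := zpow_eq_of_dvd_sub hα (a := -(expo π s.1)) (b := 0)
            (by simpa using dvd_neg.mpr hdvd)
          simpa using hh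
        have hidx : (⟨rep π s.1, ⟨rep_rep π s.1,
              fun hf => s.2.2 (fixed_of_rep_fixed π hf)⟩⟩
                : {t : Fin k // rep π t = t ∧ π t ≠ t}) = s := Subtype.ext s.2.1
        have hBs : Bfun N α π i₀ γ m nn s.1 = γ.1 * ((nn s : ↥N) : A) := by
          simp only [Bfun]
          rw [dif_neg s.2.2, hidx, hα1, hα2, one_mul, mul_one]
        rw [hBs, inv_mul_cancel_left]
  have he1 : Nat.card {s : Fin k // π s = s ∧ s ≠ i₀}
      = Nat.card {i : Fin k // π i = i} - 1 := by
    rw [Nat.card_eq_fintype_card, Nat.card_eq_fintype_card, Fintype.card_subtype,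
      Fintype.card_subtype]
    have hset : Finset.univ.filter (fun s : Fin k => π s = s ∧ s ≠ i₀)
        = (Finset.univ.filter (fun s : Fin k => π s = s)).erase i₀ := by
      ext a
      simp only [Finset.mem_filter, Finset.mem_univ, true_and, Finset.mem_erase]
      tauto
    rw [hset, Finset.card_erase_of_mem (by simp [hi₀])]
  have he2 : Nat.card {s : Fin k // rep π s = s ∧ π s ≠ s}
      = (k - Nat.card {i : Fin k // π i = i}) / p := by
    have h1 := card_nonfixed_reps hp hπp
    have h2 : Nat.card {i : Fin k // π i ≠ i} = k - Nat.card {i : Fin k // π i = i} := by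
      rw [Nat.card_eq_fintype_card, Nat.card_eq_fintype_card]
      simp only [ne_eq]
      rw [Fintype.card_subtype_compl, Fintype.card_fin]
    rw [h2] at h1
    conv_rhs => rw [← h1]
    exact (Nat.mul_div_cancel _ hp.pos).symm
  rw [Nat.card_congr E, Nat.card_prod, Nat.card_prod, Nat.card_fun, Nat.card_fun, he1, he2,
    ← mul_assoc]

end FixedCase
end DiagAux

/-- **Lemma (centraliser orders).** Let `P ≤ S_k`, `G = A(k,T) ⋊ P`, and let
`(α,…,α)π ∈ G` have prime order `p`.  If `π` is fixed-point-free then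
`|C_G((α,…,α)π)| = |C_P(π)|·|C_{Out(T)}(ᾱ)|·|T|^{k/p}`; if `π` has a fixed point and
`f` is its number of fixed points, then
`|C_G((α,…,α)π)| = |C_P(π)|·|C_{Aut(T)}(α)|·|C_{Inn(T)}(α)|^{f-1}·|T|^{(k-f)/p}`. -/
theorem centralizer_order_diag
    (T : Type) [Group T] [Fintype T] [IsSimpleGroup T]
    (hab : ∃ a b : T, a * b ≠ b * a)
    (k : ℕ) (hk : 2 ≤ k)
    (P : Subgroup (Equiv.Perm (Fin k)))
    (α : MulAut T) (π : Equiv.Perm (Fin k)) (hπ : π ∈ P)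
    (p : ℕ) (hp : p.Prime) (hord : orderOf (diagElt T k α π) = p) :
    ((∀ i, π i ≠ i) →
      Nat.card {g : ↥(Wgrp T k) //
          g ∈ AP T k P ∧ g * diagElt T k α π = diagElt T k α π * g} =
        Nat.card {σ : Equiv.Perm (Fin k) // σ ∈ P ∧ σ * π = π * σ} *
        Nat.card {β : MulAut T ⧸ Inn T //
          β * (QuotientGroup.mk α) = (QuotientGroup.mk α) * β} *
        Fintype.card T ^ (k / p)) ∧
    ((∃ i, π i = i) →
      Nat.card {g : ↥(Wgrp T k) //
          g ∈ AP T k P ∧ g * diagElt T k α π = diagElt T k α π * g} =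
        Nat.card {σ : Equiv.Perm (Fin k) // σ ∈ P ∧ σ * π = π * σ} *
        Nat.card {β : MulAut T // β * α = α * β} *
        Nat.card {β : MulAut T // β ∈ Inn T ∧ β * α = α * β} ^
          (Nat.card {i : Fin k // π i = i} - 1) *
        Fintype.card T ^ ((k - Nat.card {i : Fin k // π i = i}) / p)) := by
  classical
  haveI : Finite (MulAut T) :=
    Finite.of_injective (fun e : MulAut T => (e : T → T)) DFunLike.coe_injective
  -- `π ^ p = 1` and `α ^ p = 1`
  have hone : diagElt T k 1 1 = (1 : ↥(Wgrp T k)) := by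
    apply Subtype.ext
    apply SemidirectProduct.ext
    · funext i; rfl
    · rfl
  have hmul : ∀ (a b : MulAut T) (σ τ : Equiv.Perm (Fin k)),
      diagElt T k a σ * diagElt T k b τ = diagElt T k (a * b) (σ * τ) := by
    intro a b σ τ
    apply Subtype.ext
    apply SemidirectProduct.ext
    · funext i; rfl
    · rfl
  have hpow : ∀ n : ℕ, (diagElt T k α π) ^ n = diagElt T k (α ^ n) (π ^ n) := by
    intro n
    induction n with
    | zero => rw [pow_zero, pow_zero, pow_zero, hone]
    | succ n ih => rw [pow_succ, ih, hmul, ← pow_succ, ← pow_succ]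
  have hcomp : diagElt T k (α ^ p) (π ^ p) = (1 : ↥(Wgrp T k)) := by
    rw [← hpow, ← hord]
    exact pow_orderOf_eq_one _
  have hπp : π ^ p = 1 := congrArg (fun g : ↥(Wgrp T k) => ((g : Wr T k)).right) hcomp
  have hα : α ^ p = 1 :=
    congrArg (fun g : ↥(Wgrp T k) => ((g : Wr T k)).left ⟨0, by omega⟩) hcomp
  -- translation of the commutation condition
  have hcommIff : ∀ g : ↥(Wgrp T k),
      (g * diagElt T k α π = diagElt T k α π * g) ↔
      ((g : Wr T k).right * π = π * (g : Wr T k).right ∧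
        ∀ i, (g : Wr T k).left i * α = α * (g : Wr T k).left (π⁻¹ i)) := by
    intro g
    constructor
    · intro h
      have hval : (g : Wr T k) * ((diagElt T k α π : ↥(Wgrp T k)) : Wr T k)
          = ((diagElt T k α π : ↥(Wgrp T k)) : Wr T k) * (g : Wr T k) :=
        congrArg Subtype.val h
      exact ⟨congrArg SemidirectProduct.right hval,
        fun i => congrArg (fun w : Wr T k => w.left i) hval⟩
    · rintro ⟨h1, h2⟩
      apply Subtype.ext
      apply SemidirectProduct.ext
      · funext i
        exact h2 i
      · exact h1
  -- the outer bijection, splitting off the top component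
  have E2 : {g : ↥(Wgrp T k) //
        g ∈ AP T k P ∧ g * diagElt T k α π = diagElt T k α π * g} ≃
      {σ : Equiv.Perm (Fin k) // σ ∈ P ∧ σ * π = π * σ}
        × {β : Fin k → MulAut T //
            (∀ i j, (β i)⁻¹ * β j ∈ Inn T) ∧ ∀ i, β i * α = α * β (π⁻¹ i)} :=
    { toFun := fun g => (⟨(g.1 : Wr T k).right, g.2.1, ((hcommIff g.1).mp g.2.2).1⟩,
        ⟨(g.1 : Wr T k).left, g.1.2, ((hcommIff g.1).mp g.2.2).2⟩),
      invFun := fun y => ⟨⟨⟨y.2.1, y.1.1⟩, y.2.2.1⟩, y.1.2.1,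
        (hcommIff _).mpr ⟨y.1.2.2, y.2.2.2⟩⟩,
      left_inv := fun g => rfl,
      right_inv := fun y => rfl }
  have hX := Nat.card_congr E2
  rw [Nat.card_prod] at hX
  -- the order of Inn T
  have hcenter : Subgroup.center T = ⊥ := by
    rcases IsSimpleGroup.eq_bot_or_eq_top_of_normal (Subgroup.center T) inferInstance with h | h
    · exact h
    · exfalso
      obtain ⟨a, b, hab'⟩ := hab
      apply hab'
      have hb : b ∈ Subgroup.center T := h ▸ Subgroup.mem_top b
      exact Subgroup.mem_center_iff.mp hb a
  have hinj : Function.Injective (MulAut.conj : T →* MulAut T) := by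
    intro a b hconj
    have hx : ∀ x, a * x * a⁻¹ = b * x * b⁻¹ := fun x => by
      have h := congrArg (fun e : MulAut T => e x) hconj
      simpa [MulAut.conj_apply] using h
    have hcen : b⁻¹ * a ∈ Subgroup.center T := Subgroup.mem_center_iff.mpr (fun g => by
      calc g * (b⁻¹ * a) = b⁻¹ * (b * g * b⁻¹) * a := by group
      _ = b⁻¹ * (a * g * a⁻¹) * a := by rw [hx g]
      _ = (b⁻¹ * a) * g := by group)
    rw [hcenter, Subgroup.mem_bot] at hcen
    exact (inv_mul_eq_one.mp hcen).symm
  have hcardInn : Nat.card ↥(Inn T) = Fintype.card T := by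
    calc Nat.card ↥(Inn T) = Nat.card T :=
          (Nat.card_congr (MonoidHom.ofInjective hinj).toEquiv).symm
    _ = Fintype.card T := Nat.card_eq_fintype_card
  constructor
  · intro hfpf
    have hk0 : 0 < k := Nat.lt_of_lt_of_le Nat.zero_lt_two hk
    have hfpfcard := DiagAux.card_B_fpf (N := Inn T) hp hα hπp hk0 hfpf
    rw [hX, hfpfcard, hcardInn]
    ring
  · rintro ⟨i₀, hi₀⟩
    have hfix := DiagAux.card_B_fix (N := Inn T) hp hα hπp hi₀
    rw [hX, hfix, hcardInn]
    ring
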